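/- For the DPKdV equation (t_{uv} - t)(t_u - t_v) = 1, each coefficient n_{k,j} (k, j ≥ 1) of the characteristic vector field X_k is a polynomial in the variables x^i_l = \bar{D}^{-i}D^l x of the form n_{k,j} = m_{k,j} x^k_{j-1} + r_{k,j}, where m_{k,j} is a nonzero monomial and r_{k,j} a polynomial in variables of strictly lower order (order defined by ord(x^n_j) > ord(x^n_p) if j > p and ord(x^m_j) > ord(x^n_p) if m > n); consequently the vector fields X_1, X_2, X_3, ... are linearly independent and the characteristic Lie algebra is infinite-dimensional. -/

import Mathlib

open MvPolynomial

/-- Theorem 4 (with Lemma): for the DPKdV equation `(t_{uv}-t)(t_u-t_v) = 1`,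
each coefficient `n_{k,j}` (`k, j ≥ 1`) of the characteristic vector field
`X_k` is a polynomial in the variables `xⁱ_l = D̄⁻ⁱDˡx` (variable `(i,l)`), of
the form `n_{k,j} = m_{k,j}·xᵏ_{j-1} + r_{k,j}` with `m_{k,j}` a nonzero
monomial and `r_{k,j}` a polynomial in variables of strictly smaller order,
where `ord(xᵐ_j) > ord(xⁿ_p)` iff `m > n`, or `m = n` and `j > p` (the
lexicographic order on pairs `(i,l)`).  Consequently the vector fields
`X₁, X₂, X₃, …` are linearly independent and the characteristic Lie algebra is
infinite-dimensional.

Here `S = D̄⁻¹` acts on polynomials by renaming `xⁱ_l ↦ xⁱ⁺¹_l`, the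
coefficients of `X₁` are `n_{1,0} = 1`, `n_{1,j+1} = x¹x¹₁⋯x¹_j`, the higher
fields have `n_{k,0} = 0` for `k ≥ 2`, and the recursion (coming from
`∂f/∂t = 1`, `∂f/∂t₁ = -x`, `∂f/∂t_v = x`) is
`n_{k+1,j+1} = D̄⁻¹n_{k,j} - x¹_j D̄⁻¹n_{k,j+1} + x¹_j n_{k+1,j}`. -/
theorem stmt19
    (n : ℕ → ℕ → MvPolynomial (ℕ × ℕ) ℝ)
    (hn10 : n 1 0 = 1)
    (hn1 : ∀ j, n 1 (j+1) = ∏ l ∈ Finset.range (j+1), X ((1 : ℕ), l))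
    (hn0 : ∀ k, n (k+2) 0 = 0)
    (hnrec : ∀ k j, n (k+2) (j+1) =
      rename (fun p : ℕ × ℕ => (p.1 + 1, p.2)) (n (k+1) j)
        - X ((1 : ℕ), j) * rename (fun p : ℕ × ℕ => (p.1 + 1, p.2)) (n (k+1) (j+1))
        + X ((1 : ℕ), j) * n (k+2) j) :
    (∀ k j : ℕ, ∃ (c : ℝ) (s : (ℕ × ℕ) →₀ ℕ) (r : MvPolynomial (ℕ × ℕ) ℝ),
      c ≠ 0 ∧
      n (k+1) (j+1) = (monomial s c) * X (k+1, j) + r ∧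
      (∀ v ∈ s.support, toLex v < toLex ((k+1 : ℕ), j)) ∧
      (∀ v ∈ r.vars, toLex v < toLex ((k+1 : ℕ), j))) ∧
    LinearIndependent ℝ (fun k : ℕ => (fun j : ℕ => n (k+1) j : ℕ → MvPolynomial (ℕ × ℕ) ℝ)) := by
  classical
  have lexsucc : ∀ a b : ℕ × ℕ, toLex a < toLex b →
      toLex ((a.1 + 1, a.2) : ℕ × ℕ) < toLex ((b.1 + 1, b.2) : ℕ × ℕ) := by
    intro a b h
    rw [Prod.Lex.lt_iff] at h ⊢
    simp only [ofLex_toLex] at h ⊢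
    omega
  have vars0 : ∀ k : ℕ, (n (k+1) 0).vars = ∅ := by
    intro k
    cases k with
    | zero => rw [hn10, vars_one]
    | succ k => rw [hn0 k, vars_0]
  have hprod : ∀ j : ℕ, (∏ l ∈ Finset.range j, X ((1:ℕ), l)) =
      monomial (∑ l ∈ Finset.range j, Finsupp.single ((1:ℕ), l) 1) (1:ℝ) := by
    intro j
    induction j with
    | zero => simp
    | succ j ih =>
      rw [Finset.prod_range_succ, ih, Finset.sum_range_succ, X, monomial_mul, mul_one]
  have bound_of : ∀ (k j : ℕ) (c : ℝ) (s : (ℕ × ℕ) →₀ ℕ) (r : MvPolynomial (ℕ × ℕ) ℝ),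
      c ≠ 0 → n (k+1) (j+1) = monomial s c * X (k+1, j) + r →
      (∀ v ∈ s.support, toLex v < toLex ((k+1 : ℕ), j)) →
      (∀ v ∈ r.vars, toLex v < toLex ((k+1 : ℕ), j)) →
      ∀ v ∈ (n (k+1) (j+1)).vars, toLex v ≤ toLex ((k+1 : ℕ), j) := by
    intro k j c s r hc heq hs hr v hv
    rw [heq] at hv
    rcases Finset.mem_union.mp (vars_add_subset _ _ hv) with h | h
    · rcases Finset.mem_union.mp (vars_mul _ _ h) with h' | h'
      · rw [vars_monomial hc] at h'
        exact le_of_lt (hs v h')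
      · rw [vars_X, Finset.mem_singleton] at h'
        exact le_of_eq (by rw [h'])
    · exact le_of_lt (hr v h)
  have step : ∀ (k j : ℕ),
      (∀ v ∈ (n (k+1) j).vars, toLex v < toLex ((k+1 : ℕ), j)) →
      (∀ v ∈ (n (k+2) j).vars, toLex v < toLex ((k+2 : ℕ), j)) →
      (∃ (c : ℝ) (s : (ℕ × ℕ) →₀ ℕ) (r : MvPolynomial (ℕ × ℕ) ℝ), c ≠ 0 ∧
        n (k+1) (j+1) = monomial s c * X (k+1, j) + r ∧
        (∀ v ∈ s.support, toLex v < toLex ((k+1 : ℕ), j)) ∧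
        (∀ v ∈ r.vars, toLex v < toLex ((k+1 : ℕ), j))) →
      ∃ (c : ℝ) (s : (ℕ × ℕ) →₀ ℕ) (r : MvPolynomial (ℕ × ℕ) ℝ), c ≠ 0 ∧
        n (k+2) (j+1) = monomial s c * X (k+2, j) + r ∧
        (∀ v ∈ s.support, toLex v < toLex ((k+2 : ℕ), j)) ∧
        (∀ v ∈ r.vars, toLex v < toLex ((k+2 : ℕ), j)) := by
    rintro k j hB1 hB2 ⟨c, s, r, hc, heq, hs, hr⟩
    refine ⟨-c, Finsupp.mapDomain (fun p : ℕ × ℕ => (p.1+1, p.2)) s + Finsupp.single ((1:ℕ), j) 1,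
      rename (fun p : ℕ × ℕ => (p.1+1, p.2)) (n (k+1) j) + X ((1:ℕ), j) * n (k+2) j
        - X ((1:ℕ), j) * rename (fun p : ℕ × ℕ => (p.1+1, p.2)) r,
      neg_ne_zero.mpr hc, ?_, ?_, ?_⟩
    · have hm : (monomial (Finsupp.mapDomain (fun p : ℕ × ℕ => (p.1+1,p.2)) s
            + Finsupp.single ((1:ℕ), j) 1) (-c) : MvPolynomial (ℕ×ℕ) ℝ)
          = -(X ((1:ℕ), j) * monomial (Finsupp.mapDomain (fun p : ℕ × ℕ => (p.1+1,p.2)) s) c) := by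
        rw [X, monomial_mul, one_mul,
          add_comm (Finsupp.mapDomain (fun p : ℕ × ℕ => (p.1+1,p.2)) s) (Finsupp.single ((1:ℕ), j) 1)]
        exact (monomial _).map_neg c
      simp only [hnrec k j, heq, map_add, map_mul, rename_monomial, rename_X,
        show k+1+1 = k+2 from rfl]
      rw [hm]; ring
    · intro v hv
      rcases Finset.mem_union.mp (Finsupp.support_add hv) with h | h
      · rcases Finset.mem_image.mp (Finsupp.mapDomain_support h) with ⟨w, hw, rfl⟩
        exact lexsucc w (k+1, j) (hs w hw)
      · have h' := Finsupp.support_single_subset h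
        rw [Finset.mem_singleton] at h'
        subst h'
        exact Prod.Lex.lt_iff.mpr (Or.inl (show (1:ℕ) < k+2 by omega))
    · intro v hv
      rcases Finset.mem_union.mp (vars_sub_subset _ hv) with h | h
      · rcases Finset.mem_union.mp (vars_add_subset _ _ h) with h' | h'
        · rcases Finset.mem_image.mp (vars_rename _ _ h') with ⟨w, hw, rfl⟩
          exact lexsucc w (k+1, j) (hB1 w hw)
        · rcases Finset.mem_union.mp (vars_mul _ _ h') with h'' | h''
          · rw [vars_X, Finset.mem_singleton] at h''
            subst h''
            exact Prod.Lex.lt_iff.mpr (Or.inl (show (1:ℕ) < k+2 by omega))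
          · exact hB2 v h''
      · rcases Finset.mem_union.mp (vars_mul _ _ h) with h'' | h''
        · rw [vars_X, Finset.mem_singleton] at h''
          subst h''
          exact Prod.Lex.lt_iff.mpr (Or.inl (show (1:ℕ) < k+2 by omega))
        · rcases Finset.mem_image.mp (vars_rename _ _ h'') with ⟨w, hw, rfl⟩
          exact lexsucc w (k+1, j) (hr w hw)
  have key : ∀ k j : ℕ, ∃ (c : ℝ) (s : (ℕ × ℕ) →₀ ℕ) (r : MvPolynomial (ℕ × ℕ) ℝ),
      c ≠ 0 ∧
      n (k+1) (j+1) = (monomial s c) * X (k+1, j) + r ∧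
      (∀ v ∈ s.support, toLex v < toLex ((k+1 : ℕ), j)) ∧
      (∀ v ∈ r.vars, toLex v < toLex ((k+1 : ℕ), j)) := by
    intro k
    induction k with
    | zero =>
      intro j
      refine ⟨1, ∑ l ∈ Finset.range j, Finsupp.single ((1:ℕ), l) 1, 0, one_ne_zero, ?_, ?_, ?_⟩
      · show n 1 (j+1) = monomial (∑ l ∈ Finset.range j, Finsupp.single ((1:ℕ), l) 1) 1
            * X ((1:ℕ), j) + 0
        rw [hn1 j, Finset.prod_range_succ, hprod j, add_zero]
      · intro v hv
        rcases Finset.mem_biUnion.mp (Finsupp.support_finset_sum hv) with ⟨l, hl, hvl⟩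
        have h' := Finsupp.support_single_subset hvl
        rw [Finset.mem_singleton] at h'
        subst h'
        exact Prod.Lex.lt_iff.mpr (Or.inr ⟨rfl, Finset.mem_range.mp hl⟩)
      · intro v hv
        rw [vars_0] at hv
        exact absurd hv (Finset.notMem_empty v)
    | succ k ihk =>
      intro j
      induction j with
      | zero =>
        apply step k 0
        · intro v hv
          rw [vars0 k] at hv
          exact absurd hv (Finset.notMem_empty v)
        · intro v hv
          rw [show k+1+1 = k+2 from rfl, hn0 k, vars_0] at hv
          exact absurd hv (Finset.notMem_empty v)
        · exact ihk 0
      | succ j ihj =>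
        apply step k (j+1)
        · obtain ⟨c, s, r, hc, heq, hs, hr⟩ := ihk j
          intro v hv
          exact lt_of_le_of_lt (bound_of k j c s r hc heq hs hr v hv)
            (Prod.Lex.lt_iff.mpr (Or.inr ⟨rfl, Nat.lt_succ_self j⟩))
        · obtain ⟨c, s, r, hc, heq, hs, hr⟩ := ihj
          intro v hv
          exact lt_of_le_of_lt (bound_of (k+1) j c s r hc heq hs hr v hv)
            (Prod.Lex.lt_iff.mpr (Or.inr ⟨rfl, Nat.lt_succ_self j⟩))
        · exact ihk (j+1)
  refine ⟨key, ?_⟩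
  rw [linearIndependent_iff']
  intro t g hsum i hi
  by_contra hgi
  have hTne : (t.filter fun i => g i ≠ 0).Nonempty := ⟨i, Finset.mem_filter.mpr ⟨hi, hgi⟩⟩
  set K := (t.filter fun i => g i ≠ 0).max' hTne with hK
  have hKmem := (t.filter fun i => g i ≠ 0).max'_mem hTne
  rw [Finset.mem_filter] at hKmem
  obtain ⟨hKt, hgK⟩ := hKmem
  obtain ⟨c, s, r, hc, heq, hs, hr⟩ := key K 0
  have heq1 : n (K+1) 1 = monomial s c * X ((K+1:ℕ), 0) + r := heq
  set m := s + Finsupp.single ((K+1:ℕ), 0) 1 with hm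
  have hmmem : ((K+1:ℕ), 0) ∈ m.support := by
    rw [Finsupp.mem_support_iff, hm, Finsupp.add_apply, Finsupp.single_eq_same]
    omega
  have hcoeff0 : ∀ b : ℕ, b < K → coeff m (n (b+1) 1) = 0 := by
    intro b hbK
    by_contra h0
    have hmem : ((K+1:ℕ), 0) ∈ (n (b+1) 1).vars :=
      (mem_vars _).mpr ⟨m, by rwa [mem_support_iff], hmmem⟩
    obtain ⟨c', s', r', hc', heq', hs', hr'⟩ := key b 0
    have hle := bound_of b 0 c' s' r' hc' heq' hs' hr' _ hmem
    rw [Prod.Lex.le_iff] at hle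
    simp only [ofLex_toLex] at hle
    omega
  have hcK : coeff m (n (K+1) 1) = c := by
    rw [heq1, coeff_add]
    have h1 : monomial s c * X ((K+1:ℕ), 0) = monomial m c := by
      rw [X, monomial_mul, mul_one, hm]
    have h2 : coeff m r = 0 := by
      by_contra h0
      have hmem : ((K+1:ℕ),0) ∈ r.vars :=
        (mem_vars _).mpr ⟨m, by rwa [mem_support_iff], hmmem⟩
      exact absurd (hr _ hmem) (lt_irrefl _)
    rw [h1, h2, coeff_monomial, if_pos rfl, add_zero]
  have hsum1 : ∑ b ∈ t, g b * coeff m (n (b+1) 1) = 0 := by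
    have h := congrFun hsum 1
    simp only [Finset.sum_apply, Pi.smul_apply, Pi.zero_apply] at h
    have h2 := congrArg (coeff m) h
    rw [coeff_sum] at h2
    simpa only [coeff_smul, smul_eq_mul, coeff_zero] using h2
  have hfin : ∑ b ∈ t, g b * coeff m (n (b+1) 1) = g K * c := by
    rw [Finset.sum_eq_single K]
    · rw [hcK]
    · intro b hb hbK
      by_cases hgb : g b = 0
      · rw [hgb, zero_mul]
      · have hbK' : b < K :=
          lt_of_le_of_ne (Finset.le_max' _ b (Finset.mem_filter.mpr ⟨hb, hgb⟩)) hbK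
        rw [hcoeff0 b hbK', mul_zero]
    · intro h; exact absurd hKt h
  rw [hsum1] at hfin
  rcases mul_eq_zero.mp hfin.symm with h | h
  · exact hgK h
  · exact hc h
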